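/- Let Φ ≻ 0 and let 𝓕, 𝓑 : ℝ^q → ℝ^q. Suppose there exist 0 ≤ ρ_f, ρ_b, γ ≤ 1 and positive semidefinite matrices Ψ_b, Ψ_f such that for all ω, ω': ‖𝓑(ω)-𝓑(ω')‖²_{Φ+Ψ_b} ≤ ρ_b²‖ω-ω'‖²_Φ, ‖𝓕(ω)-𝓕(ω')‖²_Φ ≤ ρ_f²‖ω-ω'‖²_{Φ-Ψ_f}, and Ψ_b + Ψ_f ⪰ γ(Φ + Ψ_b). Then the composition 𝓑∘𝓕 is Lipschitz with constant ρ = ρ_b ρ_f √(1-γ) in the norm ‖·‖_{Φ+Ψ_b}. -/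

import Mathlib

noncomputable section
open Matrix

abbrev Evec (q : ℕ) := EuclideanSpace ℝ (Fin q)

noncomputable def qform {ι : Type*} [Fintype ι] [DecidableEq ι]
    (M : Matrix ι ι ℝ) (v : EuclideanSpace ℝ ι) : ℝ :=
  inner ℝ (Matrix.toEuclideanLin M v) v

lemma qform_eq {ι : Type*} [Fintype ι] [DecidableEq ι]
    (M : Matrix ι ι ℝ) (v : EuclideanSpace ℝ ι) :
    qform M v = star ((WithLp.equiv 2 _) v) ⬝ᵥ M *ᵥ ((WithLp.equiv 2 _) v) := by
  rw [qform, real_inner_comm, EuclideanSpace.inner_eq_star_dotProduct]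
  simp [Matrix.toEuclideanLin_apply, dotProduct_comm]

lemma qform_nonneg {ι : Type*} [Fintype ι] [DecidableEq ι]
    {M : Matrix ι ι ℝ} (hM : M.PosSemidef) (v : EuclideanSpace ℝ ι) :
    0 ≤ qform M v := by
  rw [qform_eq]
  exact hM.dotProduct_mulVec_nonneg _

lemma qform_add {ι : Type*} [Fintype ι] [DecidableEq ι]
    (M N : Matrix ι ι ℝ) (v : EuclideanSpace ℝ ι) :
    qform (M + N) v = qform M v + qform N v := by
  simp [qform_eq, Matrix.add_mulVec, dotProduct_add]

lemma qform_sub {ι : Type*} [Fintype ι] [DecidableEq ι]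
    (M N : Matrix ι ι ℝ) (v : EuclideanSpace ℝ ι) :
    qform (M - N) v = qform M v - qform N v := by
  simp [qform_eq, Matrix.sub_mulVec, dotProduct_sub]

lemma qform_smul {ι : Type*} [Fintype ι] [DecidableEq ι]
    (c : ℝ) (M : Matrix ι ι ℝ) (v : EuclideanSpace ℝ ι) :
    qform (c • M) v = c * qform M v := by
  simp [qform_eq, Matrix.smul_mulVec, dotProduct_smul, smul_eq_mul]


/-- Partial contractivity: if the backward step `𝓑` and forward step `𝓕` satisfy the
weighted estimates A1 and A2 and `Ψ_b + Ψ_f ⪰ γ(Φ + Ψ_b)`, then the composition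
`𝓑 ∘ 𝓕` is Lipschitz with constant `ρ_b ρ_f √(1-γ)` in the norm `‖·‖_{Φ+Ψ_b}`. -/
theorem partial_contractivity
    (q : ℕ) (ρf ρb γ : ℝ)
    (hρf : 0 ≤ ρf) (hρf1 : ρf ≤ 1) (hρb : 0 ≤ ρb) (hρb1 : ρb ≤ 1)
    (hγ : 0 ≤ γ) (hγ1 : γ ≤ 1)
    (Φ Ψb Ψf : Matrix (Fin q) (Fin q) ℝ)
    (hΦ : Φ.PosDef) (hΨb : Ψb.PosSemidef) (hΨf : Ψf.PosSemidef)
    (B Fw : Evec q → Evec q)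
    (hA1 : ∀ ω ω', qform (Φ + Ψb) (B ω - B ω') ≤ ρb ^ 2 * qform Φ (ω - ω'))
    (hA2 : ∀ ω ω', qform Φ (Fw ω - Fw ω') ≤ ρf ^ 2 * qform (Φ - Ψf) (ω - ω'))
    (hmat : (Ψb + Ψf - γ • (Φ + Ψb)).PosSemidef) :
    ∀ ω ω', Real.sqrt (qform (Φ + Ψb) (B (Fw ω) - B (Fw ω'))) ≤
      ρb * ρf * Real.sqrt (1 - γ) * Real.sqrt (qform (Φ + Ψb) (ω - ω')) := by
  intro ω ω'
  set u := ω - ω'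
  set w := Fw ω - Fw ω'
  set z := B (Fw ω) - B (Fw ω')
  have hA : 0 ≤ qform (Φ + Ψb) u := qform_nonneg (hΦ.posSemidef.add hΨb) u
  have h3 : qform (Φ - Ψf) u ≤ (1 - γ) * qform (Φ + Ψb) u := by
    have h0 := qform_nonneg hmat u
    rw [qform_sub, qform_add, qform_smul, qform_add] at h0
    rw [qform_sub, qform_add]
    nlinarith
  have h2 : qform Φ w ≤ ρf ^ 2 * ((1 - γ) * qform (Φ + Ψb) u) :=
    (hA2 ω ω').trans (by nlinarith)
  have h1 : qform (Φ + Ψb) z ≤ ρb ^ 2 * (ρf ^ 2 * ((1 - γ) * qform (Φ + Ψb) u)) :=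
    (hA1 (Fw ω) (Fw ω')).trans (by nlinarith)
  calc Real.sqrt (qform (Φ + Ψb) z)
      ≤ Real.sqrt (ρb ^ 2 * (ρf ^ 2 * ((1 - γ) * qform (Φ + Ψb) u))) :=
        Real.sqrt_le_sqrt h1
    _ = ρb * ρf * Real.sqrt (1 - γ) * Real.sqrt (qform (Φ + Ψb) u) := by
        rw [Real.sqrt_mul (sq_nonneg ρb), Real.sqrt_mul (sq_nonneg ρf),
          Real.sqrt_mul (by linarith : (0:ℝ) ≤ 1 - γ), Real.sqrt_sq hρb, Real.sqrt_sq hρf]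
        ring
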